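/- arXiv:1605.07283 — 2 statements merged into one kernel-verified Lean document; each statement's English description precedes it below -/
import Mathlib

section
/- Let X be any subshift over a finite alphabet and ψ : ℕ → (0,∞) any positive function. Then the Hausdorff dimension of R(ψ) is at most h/(1+b), where h = h_top(X) and b = liminf_{n→∞} (−log ψ(n))/n ∈ [0,∞] (with the convention h/(1+b) = 0 when b = ∞). No specification or edit-approachability hypothesis is needed for this upper bound. -/
open Filter MeasureTheory Set
open scoped ENNReal NNReal

noncomputable section

def SeqSpace (A : Type*) : Type _ := ℕ → A

namespace SeqSpace

variable {A : Type*}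

/-- `|u ∧ v|`: the length of the longest common prefix of `u` and `v`. -/
def lcp (u v : SeqSpace A) : ℕ := sInf {n | u n ≠ v n}

theorem lcp_mem {u v : SeqSpace A} (h : u ≠ v) : u (lcp u v) ≠ v (lcp u v) := by
  have hne : {n | u n ≠ v n}.Nonempty := by
    rcases Function.ne_iff.mp h with ⟨n, hn⟩
    exact ⟨n, hn⟩
  exact Nat.sInf_mem hne

theorem min_lcp_le (u v w : SeqSpace A) (huw : u ≠ w) :
    min (lcp u v) (lcp v w) ≤ lcp u w := by
  by_cases h : u (lcp u w) = v (lcp u w)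
  · have hvw : v (lcp u w) ≠ w (lcp u w) := h ▸ lcp_mem huw
    exact le_trans (min_le_right _ _) (Nat.sInf_le hvw)
  · exact le_trans (min_le_left _ _) (Nat.sInf_le h)

open scoped Classical in
/-- The metric `d(u,v) = e^{-|u ∧ v|}`. -/
def sdist (u v : SeqSpace A) : ℝ :=
  if u = v then 0 else Real.exp (-(lcp u v : ℝ))

theorem sdist_nonneg' (u v : SeqSpace A) : 0 ≤ sdist u v := by
  unfold sdist
  split
  · exact le_refl 0
  · exact (Real.exp_pos _).le

theorem lcp_comm (u v : SeqSpace A) : lcp u v = lcp v u := by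
  unfold lcp
  congr 1
  ext n
  exact ne_comm

theorem sdist_self' (u : SeqSpace A) : sdist u u = 0 := by simp [sdist]

theorem sdist_comm' (u v : SeqSpace A) : sdist u v = sdist v u := by
  unfold sdist
  by_cases h : u = v
  · simp [h]
  · rw [if_neg h, if_neg (Ne.symm h), lcp_comm]

theorem sdist_triangle' (u v w : SeqSpace A) : sdist u w ≤ sdist u v + sdist v w := by
  by_cases huw : u = w
  · rw [show sdist u w = 0 by rw [huw]; exact sdist_self' w]
    exact add_nonneg (sdist_nonneg' _ _) (sdist_nonneg' _ _)
  by_cases huv : u = v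
  · subst huv
    rw [sdist_self', zero_add]
  by_cases hvw : v = w
  · subst hvw
    rw [sdist_self', add_zero]
  simp only [sdist, if_neg huw, if_neg huv, if_neg hvw]
  have h1 : min (lcp u v) (lcp v w) ≤ lcp u w := min_lcp_le u v w huw
  rcases le_total (lcp u v) (lcp v w) with hle | hle
  · have h2 : lcp u v ≤ lcp u w := by rw [min_eq_left hle] at h1; exact h1
    have h3 : Real.exp (-(lcp u w : ℝ)) ≤ Real.exp (-(lcp u v : ℝ)) :=
      Real.exp_le_exp.mpr (by exact_mod_cast neg_le_neg (Nat.cast_le.mpr h2))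
    linarith [Real.exp_pos (-(lcp v w : ℝ))]
  · have h2 : lcp v w ≤ lcp u w := by rw [min_eq_right hle] at h1; exact h1
    have h3 : Real.exp (-(lcp u w : ℝ)) ≤ Real.exp (-(lcp v w : ℝ)) :=
      Real.exp_le_exp.mpr (by exact_mod_cast neg_le_neg (Nat.cast_le.mpr h2))
    linarith [Real.exp_pos (-(lcp u v : ℝ))]

theorem sdist_eq_zero' {u v : SeqSpace A} (h : sdist u v = 0) : u = v := by
  by_contra hne
  rw [sdist, if_neg hne] at h
  exact (Real.exp_pos _).ne' h

instance : MetricSpace (SeqSpace A) where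
  dist := sdist
  dist_self := sdist_self'
  dist_comm := sdist_comm'
  dist_triangle := sdist_triangle'
  eq_of_dist_eq_zero := sdist_eq_zero'

end SeqSpace

namespace SeqSpace

variable {A : Type*}

/-- The left shift map `σ`. -/
def shift (x : SeqSpace A) : SeqSpace A := fun n => x (n + 1)

/-- The word `w` occurs in `x` starting at position `k`. -/
def OccursAt (w : List A) (x : SeqSpace A) (k : ℕ) : Prop :=
  ∀ i, (h : i < w.length) → x (k + i) = w[i]'h

/-- The language of `X`: all finite words appearing in some point of `X`. -/
def language (X : Set (SeqSpace A)) : Set (List A) :=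
  {w | ∃ x ∈ X, ∃ k, OccursAt w x k}

/-- The cylinder `[w]` of a finite word `w`. -/
def cyl (w : List A) : Set (SeqSpace A) := {x | OccursAt w x 0}

/-- Birkhoff sum `S_n φ = ∑_{k=0}^{n-1} φ ∘ σ^k`. -/
def birkhoff (φ : SeqSpace A → ℝ) (n : ℕ) (x : SeqSpace A) : ℝ :=
  ∑ k ∈ Finset.range n, φ (shift^[k] x)

/-- The words of length `n` in a collection `D` of words. -/
def wordsOfLen (D : Set (List A)) (n : ℕ) : Set (List A) := {w ∈ D | w.length = n}

/-- Topological pressure `P(D,φ)` of a potential `φ` computed over the words of `D`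
(the points of the subshift `X` are used to evaluate the Birkhoff sups over cylinders). -/
def pressure (X : Set (SeqSpace A)) (D : Set (List A)) (φ : SeqSpace A → ℝ) : ℝ :=
  atTop.limsup fun n =>
    Real.log (∑ᶠ w ∈ wordsOfLen D n, Real.exp (sSup (birkhoff φ n '' (X ∩ cyl w)))) / n

/-- The recurrence set `R(ψ)` of points of `X` with `d(σ^n x, x) < ψ(n)` infinitely often. -/
def recSet (X : Set (SeqSpace A)) (ψ : ℕ → ℝ) : Set (SeqSpace A) :=
  {x ∈ X | ∃ᶠ n in atTop, dist (shift^[n] x) x < ψ n}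

/-- The recurrence set `R(f)` of points of `X` with `d(σ^n x, x) ≤ e^{-S_n f(x)}`
infinitely often. -/
def recSetF (X : Set (SeqSpace A)) (f : SeqSpace A → ℝ) : Set (SeqSpace A) :=
  {x ∈ X | ∃ᶠ n in atTop, dist (shift^[n] x) x ≤ Real.exp (-(birkhoff f n x))}

/-- A single edit of a word: substitution, insertion or deletion of one symbol. -/
def EditStep (w w' : List A) : Prop :=
  (∃ (u₁ u₂ : List A) (a a' : A), w = u₁ ++ a :: u₂ ∧ w' = u₁ ++ a' :: u₂) ∨
  (∃ (u₁ u₂ : List A) (a' : A), w = u₁ ++ u₂ ∧ w' = u₁ ++ a' :: u₂) ∨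
  (∃ (u₁ u₂ : List A) (a : A), w = u₁ ++ a :: u₂ ∧ w' = u₁ ++ u₂)

/-- `EditChain n v w` : `v` can be transformed into `w` by `n` edits. -/
def EditChain : ℕ → List A → List A → Prop
  | 0, v, w => v = w
  | n + 1, v, w => ∃ u, EditStep v u ∧ EditChain n u w

/-- The edit distance `d̂(v,w)`: the minimal number of edits transforming `v` into `w`. -/
def editDist (v w : List A) : ℕ := sInf {n | EditChain n v w}

/-- A mistake function: a nondecreasing `g : ℕ → ℕ` with `g n / n → 0`. -/
def MistakeFunction (g : ℕ → ℕ) : Prop :=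
  Monotone g ∧ Tendsto (fun n => (g n : ℝ) / n) atTop (nhds 0)

/-- `L` is edit approachable by `G`. -/
def EditApproachable (L G : Set (List A)) : Prop :=
  ∃ g : ℕ → ℕ, MistakeFunction g ∧ ∀ w ∈ L, ∃ v ∈ G, editDist v w ≤ g w.length

/-- `G ⊆ L` has (W)-specification with gap length `τ`. -/
def HasSpecW (L G : Set (List A)) (τ : ℕ) : Prop :=
  ∀ v ∈ G, ∀ w ∈ G, ∃ u ∈ L, u.length ≤ τ ∧ v ++ u ++ w ∈ G

/-- The (non-strict) lexicographic order on sequences. -/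
def LexLe [LinearOrder A] (u v : SeqSpace A) : Prop :=
  u = v ∨ ∃ n, (∀ i < n, u i = v i) ∧ u n < v n

end SeqSpace

open SeqSpace
namespace RecAux

open SeqSpace

variable {A : Type*}

lemma shift_iterate_apply (x : SeqSpace A) (n j : ℕ) : shift^[n] x j = x (j + n) := by
  induction n generalizing j with
  | zero => rfl
  | succ n ih =>
    rw [Function.iterate_succ_apply']
    show shift^[n] x (j + 1) = x (j + (n + 1))
    rw [ih]; congr 1; omega

/-- `m(n) = ⌈-log ψ(n)⌉₊`. -/
def mfun (ψ : ℕ → ℝ) (n : ℕ) : ℕ := ⌈-Real.log (ψ n)⌉₊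

/-- The periodic-cylinder set. -/
def Tset (ψ : ℕ → ℝ) (n : ℕ) (w : List A) : Set (SeqSpace A) :=
  {x | ∀ j < n + mfun ψ n, w[j % n]? = some (x j)}

lemma dist_eq_of_ne {x y : SeqSpace A} (hne : x ≠ y) :
    dist x y = Real.exp (-(lcp x y : ℝ)) := by
  show sdist x y = _
  rw [sdist, if_neg hne]

lemma diam_Tset (ψ : ℕ → ℝ) (n : ℕ) (w : List A) :
    EMetric.diam (Tset ψ n w) ≤ ENNReal.ofReal (Real.exp (-((n + mfun ψ n : ℕ) : ℝ))) := by
  apply EMetric.diam_le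
  intro x hx y hy
  rcases eq_or_ne x y with rfl | hne
  · simp
  · rw [edist_dist]
    apply ENNReal.ofReal_le_ofReal
    rw [dist_eq_of_ne hne]
    apply Real.exp_le_exp.mpr
    apply neg_le_neg
    have hl : n + mfun ψ n ≤ lcp x y := by
      by_contra hlt
      push_neg at hlt
      have hd := lcp_mem hne
      have h1 := hx (lcp x y) hlt
      have h2 := hy (lcp x y) hlt
      rw [h1] at h2
      exact hd (Option.some_injective _ h2)
    exact_mod_cast hl

lemma lcp_ge_of_dist_lt (ψ : ℕ → ℝ) (hψ : ∀ n, 0 < ψ n) {x : SeqSpace A} {n : ℕ}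
    (hrec : dist (shift^[n] x) x < ψ n) (i : ℕ) (hi : i < mfun ψ n) :
    x (i + n) = x i := by
  rcases eq_or_ne (shift^[n] x) x with he | hne
  · have := congrFun he i
    rwa [shift_iterate_apply] at this
  · have hd : Real.exp (-(lcp (shift^[n] x) x : ℝ)) < ψ n := by
      rw [← dist_eq_of_ne hne]; exact hrec
    have h2 : -Real.log (ψ n) < (lcp (shift^[n] x) x : ℝ) := by
      have := (Real.lt_log_iff_exp_lt (hψ n)).mpr hd
      linarith
    have hlcp : mfun ψ n ≤ lcp (shift^[n] x) x := Nat.ceil_le.mpr h2.le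
    have hnot : shift^[n] x i = x i := by
      by_contra hcon
      have h3 : lcp (shift^[n] x) x ≤ i := Nat.sInf_le hcon
      omega
    rw [← hnot, shift_iterate_apply]

lemma mem_Tset (ψ : ℕ → ℝ) (hψ : ∀ n, 0 < ψ n) {x : SeqSpace A} {n : ℕ} (hn : 0 < n)
    (hrec : dist (shift^[n] x) x < ψ n) :
    x ∈ Tset ψ n (List.ofFn (fun i : Fin n => x i)) := by
  have main : ∀ j, j < n + mfun ψ n → x j = x (j % n) := by
    intro j
    induction j using Nat.strong_induction_on with
    | _ j IH =>
      intro hj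
      rcases lt_or_ge j n with hlt | hge
      · rw [Nat.mod_eq_of_lt hlt]
      · obtain ⟨i, rfl⟩ : ∃ i, j = i + n := ⟨j - n, (Nat.sub_add_cancel hge).symm⟩
        have hi : i < mfun ψ n := by omega
        rw [lcp_ge_of_dist_lt ψ hψ hrec i hi, Nat.add_mod_right]
        exact IH i (by omega) (by omega)
  intro j hj
  have hjn : j % n < n := Nat.mod_lt _ hn
  rw [List.getElem?_ofFn, dif_pos hjn]
  exact congrArg some (main j hj).symm

lemma prefix_mem_words {X : Set (SeqSpace A)} {x : SeqSpace A} (hx : x ∈ X) (n : ℕ) :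
    (List.ofFn (fun i : Fin n => x i)) ∈ wordsOfLen (language X) n := by
  constructor
  · exact ⟨x, hx, 0, fun i hi => by
      rw [List.getElem_ofFn]
      simp⟩
  · simp

lemma words_finite [Finite A] (L : Set (List A)) (n : ℕ) : (wordsOfLen L n).Finite := by
  apply (Set.finite_range (fun f : Fin n → A => List.ofFn f)).subset
  rintro w ⟨-, hlen⟩
  refine ⟨fun i => w[(i : ℕ)]'(by omega), ?_⟩
  apply List.ext_getElem
  · simp [hlen]
  · intro i h1 h2
    simp

end RecAux

/-- **Upper bound in Theorem 1.4 C2.** For any subshift `X` and any positive `ψ`,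
`dim_H R(ψ) ≤ h/(1+b)` where `h = h_top(X)` and `b = liminf (-log ψ(n))/n ∈ [0,∞]`
(with `h/(1+b) = 0` when `b = ∞`); no specification hypothesis is needed. -/
theorem dimH_recSet_le_entropy_div_one_add_liminf
    {A : Type*} [Finite A] (X : Set (SeqSpace A))
    (hXcomp : IsCompact X) (hXinv : shift '' X ⊆ X)
    (h : ℝ)
    (hent : Tendsto (fun n => Real.log ((wordsOfLen (language X) n).ncard) / n)
      atTop (nhds h))
    (ψ : ℕ → ℝ) (hψpos : ∀ n, 0 < ψ n)
    (b : ℝ≥0∞)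
    (hb : atTop.liminf (fun n => ENNReal.ofReal (-Real.log (ψ n) / n)) = b) :
    dimH (recSet X ψ) ≤ ENNReal.ofReal h / (1 + b) := by
  classical
  borelize (SeqSpace A)
  apply dimH_le
  intro d hdtop
  by_contra hdle
  push_neg at hdle
  -- hdle : ENNReal.ofReal h / (1 + b) < ↑d
  have hd0 : 0 < (d : ℝ) := by
    have h1 : (0 : ℝ≥0∞) < (d : ℝ≥0∞) := lt_of_le_of_lt zero_le hdle
    exact_mod_cast h1
  -- choose b'
  obtain ⟨b', hb'0, hb'b, hhb'⟩ :
      ∃ b' : ℝ, 0 ≤ b' ∧ (b' = 0 ∨ ENNReal.ofReal b' < b) ∧ h < (d : ℝ) * (1 + b') := by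
    rcases le_or_gt h 0 with hh | hh
    · exact ⟨0, le_rfl, Or.inl rfl, by nlinarith⟩
    · rcases eq_top_or_lt_top b with hbt | hbf
      · refine ⟨h / d, by positivity, Or.inr (by rw [hbt]; exact ENNReal.ofReal_lt_top), ?_⟩
        have hdd : (d : ℝ) * (h / (d : ℝ)) = h := by field_simp
        nlinarith
      · have hb0 : b = ENNReal.ofReal b.toReal := (ENNReal.ofReal_toReal hbf.ne).symm
        set t := b.toReal with ht
        have ht0 : 0 ≤ t := ENNReal.toReal_nonneg
        have key : h < (d : ℝ) * (1 + t) := by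
          have h1 : ENNReal.ofReal h < (d : ℝ≥0∞) * (1 + b) := by
            rw [ENNReal.div_lt_iff (Or.inl (by simp)) (Or.inl (by
              simp [ENNReal.add_eq_top, hbf.ne]))] at hdle
            exact hdle
          have h2 : (d : ℝ≥0∞) * (1 + b) = ENNReal.ofReal ((d : ℝ) * (1 + t)) := by
            rw [ENNReal.ofReal_mul hd0.le, ENNReal.ofReal_add zero_le_one ht0,
              ENNReal.ofReal_one, ENNReal.ofReal_coe_nnreal, ← hb0]
          rw [h2] at h1
          exact (ENNReal.ofReal_lt_ofReal_iff (by positivity)).mp h1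
        rcases eq_or_lt_of_le ht0 with ht0' | ht0'
        · refine ⟨0, le_rfl, Or.inl rfl, by rw [← ht0'] at key; simpa using key⟩
        · set s := max (h / (d : ℝ) - 1) 0 with hs
          have hst : s < t := by
            apply max_lt _ ht0'
            rw [div_sub' hd0.ne', div_lt_iff₀ hd0]
            nlinarith
          refine ⟨(s + t) / 2, by positivity, Or.inr ?_, ?_⟩
          · rw [hb0]
            exact (ENNReal.ofReal_lt_ofReal_iff ht0').mpr (by linarith)
          · have hsge : h / (d : ℝ) - 1 ≤ s := le_max_left _ _
            have : h / (d : ℝ) - 1 < (s + t) / 2 := by linarith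
            rw [div_sub' hd0.ne', div_lt_iff₀ hd0] at this
            nlinarith
  -- choose ε and c
  set δ := (d : ℝ) * (1 + b') - h with hδdef
  have hδ0 : 0 < δ := by rw [hδdef]; linarith
  set ε := δ / (2 * ((d : ℝ) + 1)) with hεdef
  have hε0 : 0 < ε := by positivity
  have hεeq : ε * ((d : ℝ) + 1) = δ / 2 := by
    rw [hεdef]; field_simp
  set c := (d : ℝ) * (1 + b' - ε) - (h + ε) with hcdef
  have hc0 : 0 < c := by
    have : c = δ - ε * ((d : ℝ) + 1) := by rw [hcdef, hδdef]; ring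
    rw [this, hεeq]; linarith
  -- eventual bounds
  have hE1 : ∀ᶠ n : ℕ in atTop,
      (((wordsOfLen (language X) n).ncard : ℝ)) ≤ Real.exp ((h + ε) * n) := by
    have h1 : ∀ᶠ n : ℕ in atTop,
        Real.log ((wordsOfLen (language X) n).ncard) / n < h + ε :=
      hent.eventually (eventually_lt_nhds (by linarith))
    filter_upwards [h1, eventually_ge_atTop 1] with n hn hn1
    have hnpos : (0 : ℝ) < n := by exact_mod_cast hn1
    have hlog : Real.log ((wordsOfLen (language X) n).ncard) ≤ (h + ε) * n := by
      rw [div_lt_iff₀ hnpos] at hn; linarith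
    rcases Nat.eq_zero_or_pos (wordsOfLen (language X) n).ncard with h0 | hpos
    · rw [h0]; simpa using (Real.exp_pos ((h + ε) * (n:ℝ))).le
    · have h1' : (1 : ℝ) ≤ ((wordsOfLen (language X) n).ncard : ℝ) := by exact_mod_cast hpos
      calc ((wordsOfLen (language X) n).ncard : ℝ)
          = Real.exp (Real.log ((wordsOfLen (language X) n).ncard)) :=
            (Real.exp_log (by linarith)).symm
        _ ≤ Real.exp ((h + ε) * n) := Real.exp_le_exp.mpr hlog
  have hE2 : ∀ᶠ n : ℕ in atTop, (b' - ε) * n ≤ (RecAux.mfun ψ n : ℝ) := by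
    rcases le_or_gt (b' - ε) 0 with hbe | hbe
    · filter_upwards with n
      have h1 : (b' - ε) * n ≤ 0 := mul_nonpos_of_nonpos_of_nonneg hbe (Nat.cast_nonneg n)
      exact h1.trans (Nat.cast_nonneg _)
    · have hlt : ENNReal.ofReal (b' - ε) < b := by
        rcases hb'b with rfl | hb'b
        · exfalso; linarith
        · exact lt_of_le_of_lt (ENNReal.ofReal_le_ofReal (by linarith)) hb'b
      rw [← hb] at hlt
      have h2 := Filter.eventually_lt_of_lt_liminf hlt
      filter_upwards [h2, eventually_ge_atTop 1] with n hn hn1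
      have hnpos : (0 : ℝ) < n := by exact_mod_cast hn1
      have h3 : b' - ε < -Real.log (ψ n) / n := by
        by_contra hcon
        push_neg at hcon
        exact absurd (ENNReal.ofReal_le_ofReal hcon) (not_le.mpr hn)
      have h4 : (b' - ε) * n ≤ -Real.log (ψ n) := by
        rw [lt_div_iff₀ hnpos] at h3; linarith
      exact h4.trans (Nat.le_ceil _)
  obtain ⟨N₀, hN₀⟩ := eventually_atTop.mp (hE1.and hE2)
  -- the covering family
  set T : ℕ → ℕ × List A → Set (SeqSpace A) := fun N p =>
    if p.2 ∈ wordsOfLen (language X) (N + p.1) then RecAux.Tset ψ (N + p.1) p.2 else ∅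
    with hTdef
  have hr : Tendsto (fun N : ℕ => ENNReal.ofReal (Real.exp (-(N : ℝ)))) atTop (nhds 0) := by
    rw [← ENNReal.ofReal_zero]
    apply ENNReal.tendsto_ofReal
    exact Real.tendsto_exp_atBot.comp (tendsto_neg_atBot_iff.mpr tendsto_natCast_atTop_atTop)
  have ht : ∀ᶠ N : ℕ in atTop, ∀ i : ℕ × List A,
      EMetric.diam (T N i) ≤ ENNReal.ofReal (Real.exp (-(N : ℝ))) := by
    filter_upwards with N
    rintro ⟨k, w⟩
    by_cases hw : w ∈ wordsOfLen (language X) (N + k)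
    · show EMetric.diam (T N (k, w)) ≤ _
      rw [hTdef]
      simp only [if_pos hw]
      refine (RecAux.diam_Tset ψ (N + k) w).trans (ENNReal.ofReal_le_ofReal ?_)
      apply Real.exp_le_exp.mpr
      have h1 : (N : ℝ) ≤ ((N + k + RecAux.mfun ψ (N + k) : ℕ) : ℝ) := by
        push_cast; linarith [Nat.cast_nonneg (α := ℝ) k,
          Nat.cast_nonneg (α := ℝ) (RecAux.mfun ψ (N + k))]
      linarith
    · show EMetric.diam (T N (k, w)) ≤ _
      rw [hTdef]
      simp [if_neg hw, EMetric.diam]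
  have hst : ∀ᶠ N : ℕ in atTop, recSet X ψ ⊆ ⋃ i : ℕ × List A, T N i := by
    filter_upwards [eventually_ge_atTop 1] with N hN1
    rintro x ⟨hxX, hxrec⟩
    obtain ⟨n, hnN, hdist⟩ := (frequently_atTop.mp hxrec) N
    refine Set.mem_iUnion.mpr ⟨(n - N, List.ofFn fun i : Fin n => x i), ?_⟩
    have hn' : N + (n - N) = n := by omega
    show _ ∈ T N _
    rw [hTdef]
    simp only [hn']
    rw [if_pos (RecAux.prefix_mem_words hxX n)]
    exact RecAux.mem_Tset ψ hψpos (by omega) hdist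
  have hcov := MeasureTheory.Measure.hausdorffMeasure_le_liminf_tsum (d : ℝ) (recSet X ψ)
    (fun N : ℕ => ENNReal.ofReal (Real.exp (-(N : ℝ)))) hr T ht hst
  -- the geometric bound
  set R0 := ENNReal.ofReal (Real.exp (-c)) with hR0
  have hR01 : R0 < 1 := by
    rw [hR0]
    exact ENNReal.ofReal_lt_one.mpr (Real.exp_lt_one_iff.mpr (by linarith))
  have hCne : (1 - R0)⁻¹ ≠ ⊤ :=
    ENNReal.inv_ne_top.mpr (fun h0 => absurd (tsub_eq_zero_iff_le.mp h0) (not_le.mpr hR01))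
  have hzero_rpow : (0 : ℝ≥0∞) ^ (d : ℝ) = 0 := ENNReal.zero_rpow_of_pos hd0
  have hsum : ∀ N, N₀ ≤ N →
      (∑' i : ℕ × List A, EMetric.diam (T N i) ^ (d : ℝ)) ≤ R0 ^ N * (1 - R0)⁻¹ := by
    intro N hN
    rw [ENNReal.tsum_prod']
    have hterm : ∀ k : ℕ,
        (∑' w : List A, EMetric.diam (T N (k, w)) ^ (d : ℝ)) ≤ R0 ^ (N + k) := by
      intro k
      obtain ⟨hcard, hm⟩ := hN₀ (N + k) (by omega)
      have hfin := RecAux.words_finite (A := A) (language X) (N + k)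
      set m := RecAux.mfun ψ (N + k) with hmdef
      rw [tsum_eq_sum (s := hfin.toFinset) (fun w hw => by
        have hw' : w ∉ wordsOfLen (language X) (N + k) := by simpa using hw
        rw [hTdef]
        simp only [if_neg hw', EMetric.diam, EMetric.diam_empty]
        exact hzero_rpow)]
      have hone : ∀ w ∈ hfin.toFinset, EMetric.diam (T N (k, w)) ^ (d : ℝ) ≤
          ENNReal.ofReal (Real.exp (-(((N + k + m : ℕ) : ℝ)) * d)) := by
        intro w hw
        have hw' : w ∈ wordsOfLen (language X) (N + k) := by simpa using hw
        have hdiam : EMetric.diam (T N (k, w)) ≤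
            ENNReal.ofReal (Real.exp (-((N + k + m : ℕ) : ℝ))) := by
          rw [hTdef]
          simp only [if_pos hw']
          exact RecAux.diam_Tset ψ (N + k) w
        calc EMetric.diam (T N (k, w)) ^ (d : ℝ)
            ≤ (ENNReal.ofReal (Real.exp (-((N + k + m : ℕ) : ℝ)))) ^ (d : ℝ) :=
              ENNReal.rpow_le_rpow hdiam hd0.le
          _ = ENNReal.ofReal ((Real.exp (-((N + k + m : ℕ) : ℝ))) ^ (d : ℝ)) :=
              ENNReal.ofReal_rpow_of_pos (Real.exp_pos _)
          _ = ENNReal.ofReal (Real.exp (-(((N + k + m : ℕ) : ℝ)) * d)) := by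
              rw [← Real.exp_mul]
      calc (∑ w ∈ hfin.toFinset, EMetric.diam (T N (k, w)) ^ (d : ℝ))
          ≤ ∑ _w ∈ hfin.toFinset,
              ENNReal.ofReal (Real.exp (-(((N + k + m : ℕ) : ℝ)) * d)) :=
            Finset.sum_le_sum hone
        _ = hfin.toFinset.card •
              ENNReal.ofReal (Real.exp (-(((N + k + m : ℕ) : ℝ)) * d)) :=
            Finset.sum_const _
        _ = ((wordsOfLen (language X) (N + k)).ncard : ℝ≥0∞) *
              ENNReal.ofReal (Real.exp (-(((N + k + m : ℕ) : ℝ)) * d)) := by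
            rw [nsmul_eq_mul, Set.ncard_eq_toFinset_card _ hfin]
        _ ≤ ENNReal.ofReal (Real.exp ((h + ε) * ((N + k : ℕ) : ℝ))) *
              ENNReal.ofReal (Real.exp (-(((N + k + m : ℕ) : ℝ)) * d)) := by
            apply mul_le_mul_left
            rw [← ENNReal.ofReal_natCast]
            exact ENNReal.ofReal_le_ofReal hcard
        _ = ENNReal.ofReal (Real.exp ((h + ε) * ((N + k : ℕ) : ℝ) +
              -(((N + k + m : ℕ) : ℝ)) * d)) := by
            rw [← ENNReal.ofReal_mul (Real.exp_pos _).le, ← Real.exp_add]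
        _ ≤ ENNReal.ofReal (Real.exp (-(c * ((N + k : ℕ) : ℝ)))) := by
            apply ENNReal.ofReal_le_ofReal
            apply Real.exp_le_exp.mpr
            have hx0 : (0 : ℝ) ≤ ((N + k : ℕ) : ℝ) := Nat.cast_nonneg _
            have hm' : (b' - ε) * ((N + k : ℕ) : ℝ) ≤ (m : ℝ) := hm
            have hcc : c = (d : ℝ) * (1 + b' - ε) - (h + ε) := hcdef
            push_cast at hm' ⊢
            nlinarith [hd0.le, mul_le_mul_of_nonneg_left hm' hd0.le]
        _ = R0 ^ (N + k) := by
            rw [hR0, ← ENNReal.ofReal_pow (Real.exp_pos _).le, ← Real.exp_nat_mul]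
            congr 1
            push_cast
            ring
    calc (∑' k : ℕ, ∑' w : List A, EMetric.diam (T N (k, w)) ^ (d : ℝ))
        ≤ ∑' k : ℕ, R0 ^ (N + k) := ENNReal.tsum_le_tsum hterm
      _ = ∑' k : ℕ, R0 ^ N * R0 ^ k := by simp [pow_add]
      _ = R0 ^ N * (1 - R0)⁻¹ := by rw [ENNReal.tsum_mul_left, ENNReal.tsum_geometric]
  have hlim : Tendsto (fun N : ℕ => R0 ^ N * (1 - R0)⁻¹) atTop (nhds 0) := by
    have h1 := ENNReal.tendsto_pow_atTop_nhds_zero_of_lt_one hR01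
    have h2 := ENNReal.Tendsto.mul_const h1 (Or.inr hCne)
    simpa using h2
  have hliminf : atTop.liminf
      (fun N : ℕ => ∑' i : ℕ × List A, EMetric.diam (T N i) ^ (d : ℝ)) = 0 := by
    apply le_antisymm _ zero_le
    calc atTop.liminf (fun N : ℕ => ∑' i : ℕ × List A, EMetric.diam (T N i) ^ (d : ℝ))
        ≤ atTop.liminf (fun N : ℕ => R0 ^ N * (1 - R0)⁻¹) :=
          Filter.liminf_le_liminf (eventually_atTop.mpr ⟨N₀, hsum⟩)
      _ = 0 := hlim.liminf_eq
  simp only [EMetric.diam] at hliminf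
  rw [hdtop, hliminf] at hcov
  simp at hcov
end
end

section
/- Let X be any subshift over a finite alphabet and f : X → (0,∞) a continuous positive function. Then the Hausdorff dimension of R(f) is at most s(X), where s(X) is the unique solution s ≥ 0 of the pressure equation P(−s(f+1)) = 0. No specification or edit-approachability hypothesis is needed for this upper bound. -/
open Filter MeasureTheory Set
open scoped ENNReal NNReal

noncomputable section

open SeqSpace

namespace RecAux
open SeqSpace

variable {A : Type*}

lemma shift_iter_apply (x : SeqSpace A) (k i : ℕ) : (shift^[k] x) i = x (i + k) := by
  induction k generalizing x with
  | zero => rfl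
  | succ k ih =>
    rw [Function.iterate_succ_apply, ih]
    rfl

lemma iter_mem {X : Set (SeqSpace A)} (hXinv : shift '' X ⊆ X) {x : SeqSpace A}
    (hx : x ∈ X) (k : ℕ) : shift^[k] x ∈ X := by
  induction k with
  | zero => exact hx
  | succ k ih =>
    rw [Function.iterate_succ_apply']
    exact hXinv ⟨_, ih, rfl⟩

lemma dist_eq {x y : SeqSpace A} (h : x ≠ y) : dist x y = Real.exp (-(lcp x y : ℝ)) := by
  show sdist x y = _
  rw [sdist, if_neg h]

lemma dist_le_of_agree {x y : SeqSpace A} {m : ℕ} (h : ∀ j, j < m → x j = y j) :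
    dist x y ≤ Real.exp (-(m : ℝ)) := by
  by_cases hxy : x = y
  · subst hxy
    rw [dist_self]
    exact (Real.exp_pos _).le
  · rw [dist_eq hxy]
    apply Real.exp_le_exp.mpr
    rw [neg_le_neg_iff, Nat.cast_le]
    refine le_csInf ?_ ?_
    · rcases Function.ne_iff.mp hxy with ⟨n, hn⟩
      exact ⟨n, hn⟩
    · intro b hb
      by_contra hlt
      exact hb (h b (by omega))

lemma agree_of_dist_le {x y : SeqSpace A} {c : ℝ} (h : dist x y ≤ Real.exp (-c))
    {i : ℕ} (hi : (i : ℝ) < c) : x i = y i := by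
  by_cases hxy : x = y
  · rw [hxy]
  · rw [dist_eq hxy] at h
    have hc : c ≤ (lcp x y : ℝ) := by
      have := Real.exp_le_exp.mp h
      linarith
    have hilt : i < lcp x y := by exact_mod_cast hi.trans_le hc
    have := Nat.notMem_of_lt_sInf (s := {n | x n ≠ y n}) hilt
    simpa using this

lemma agree_chain {x y : SeqSpace A} {n m : ℕ} (hn : 1 ≤ n) (hpre : ∀ i, i < n → x i = y i)
    (hx : ∀ i, i < m → x (n + i) = x i) (hy : ∀ i, i < m → y (n + i) = y i) :
    ∀ j, j < n + m → x j = y j := by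
  intro j
  induction j using Nat.strong_induction_on with
  | _ j ih =>
    intro hj
    rcases lt_or_ge j n with h | h
    · exact hpre j h
    · obtain ⟨i, rfl⟩ : ∃ i, j = n + i := ⟨j - n, by omega⟩
      have him : i < m := by omega
      rw [hx i him, hy i him]
      exact ih i (by omega) (by omega)

lemma cyl_nonempty {X : Set (SeqSpace A)} (hXinv : shift '' X ⊆ X) {w : List A}
    (hw : w ∈ language X) : (X ∩ cyl w).Nonempty := by
  obtain ⟨x, hx, k, hocc⟩ := hw
  refine ⟨shift^[k] x, iter_mem hXinv hx k, ?_⟩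
  intro i hi
  rw [shift_iter_apply]
  have := hocc i hi
  rw [show 0 + i + k = k + i by omega]
  exact this

end RecAux

namespace RecAux
open SeqSpace

variable {A : Type*}

lemma birkhoff_phi (f : SeqSpace A → ℝ) (u : ℝ) (n : ℕ) (x : SeqSpace A) :
    birkhoff (fun y => -(u * (f y + 1))) n x = -(u * (birkhoff f n x + n)) := by
  simp only [birkhoff]
  rw [Finset.sum_neg_distrib, ← Finset.mul_sum, Finset.sum_add_distrib, Finset.sum_const,
    Finset.card_range, nsmul_eq_mul, mul_one]

lemma birkhoff_le_of_le {X : Set (SeqSpace A)} (hXinv : shift '' X ⊆ X)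
    {φ : SeqSpace A → ℝ} {M : ℝ} (hφ : ∀ y ∈ X, φ y ≤ M) {x : SeqSpace A}
    (hx : x ∈ X) (n : ℕ) : birkhoff φ n x ≤ n * M := by
  calc birkhoff φ n x ≤ ∑ _k ∈ Finset.range n, M :=
        Finset.sum_le_sum fun k _ => hφ _ (iter_mem hXinv hx k)
    _ = n * M := by rw [Finset.sum_const, Finset.card_range, nsmul_eq_mul]

lemma birkhoff_nonneg {X : Set (SeqSpace A)} (hXinv : shift '' X ⊆ X)
    {f : SeqSpace A → ℝ} (hf : ∀ y ∈ X, 0 ≤ f y) {x : SeqSpace A}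
    (hx : x ∈ X) (n : ℕ) : 0 ≤ birkhoff f n x :=
  Finset.sum_nonneg fun k _ => hf _ (iter_mem hXinv hx k)

lemma card_words_le [Finite A] [Nonempty A] {S : Set (List A)} {n : ℕ}
    (hfin : S.Finite) (hS : ∀ w ∈ S, w.length = n) :
    hfin.toFinset.card ≤ Nat.card A ^ n := by
  classical
  have hinj : Function.Injective
      (fun (w : S) (i : Fin n) => (w : List A).getD i (Classical.arbitrary A)) := by
    intro a b heq
    have l1 := hS _ a.2
    have l2 := hS _ b.2
    refine Subtype.ext (List.ext_getElem (l1.trans l2.symm) ?_)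
    intro i hi1 hi2
    have h := congrFun heq ⟨i, by omega⟩
    simp only at h
    rw [List.getD_eq_getElem _ _ (by exact hi1), List.getD_eq_getElem _ _ (by exact hi2)] at h
    exact h
  have hcard := Nat.card_le_card_of_injective _ hinj
  have hle : Nat.card (Fin n → A) = Nat.card A ^ n := by
    rw [Nat.card_fun]
    simp
  rw [hle] at hcard
  rwa [Nat.card_coe_set_eq, Set.ncard_eq_toFinset_card _ hfin] at hcard

end RecAux

namespace RecAux
open SeqSpace

variable {A : Type*}

section Z

variable [Finite A]

lemma wordsFin (X : Set (SeqSpace A)) (n : ℕ) : (wordsOfLen (language X) n).Finite :=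
  Set.Finite.subset (List.finite_length_eq A n) fun _ hw => hw.2

noncomputable def Zsum (X : Set (SeqSpace A)) (φ : SeqSpace A → ℝ) (n : ℕ) : ℝ :=
  ∑ᶠ w ∈ wordsOfLen (language X) n, Real.exp (sSup (birkhoff φ n '' (X ∩ cyl w)))

lemma Zsum_eq (X : Set (SeqSpace A)) (φ : SeqSpace A → ℝ) (n : ℕ) :
    Zsum X φ n
      = ∑ w ∈ (wordsFin X n).toFinset, Real.exp (sSup (birkhoff φ n '' (X ∩ cyl w))) :=
  finsum_mem_eq_finite_toFinset_sum _ _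

lemma pressure_eq (X : Set (SeqSpace A)) (φ : SeqSpace A → ℝ) :
    pressure X (language X) φ = Filter.atTop.limsup fun n => Real.log (Zsum X φ n) / n := rfl

lemma Zsum_nonneg (X : Set (SeqSpace A)) (φ : SeqSpace A → ℝ) (n : ℕ) : 0 ≤ Zsum X φ n := by
  rw [Zsum_eq]
  exact Finset.sum_nonneg fun w _ => (Real.exp_pos _).le

end Z

/-- The basic covering sets. -/
def ESet (X : Set (SeqSpace A)) (f : SeqSpace A → ℝ) (n : ℕ) (w : List A) :
    Set (SeqSpace A) :=
  {x | x ∈ X ∧ x ∈ cyl w ∧ dist (shift^[n] x) x ≤ Real.exp (-(birkhoff f n x))}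

open scoped Classical in
/-- The covering family, indexed by pairs. -/
noncomputable def TSet (X : Set (SeqSpace A)) (f : SeqSpace A → ℝ) (N : ℕ) (p : ℕ × List A) :
    Set (SeqSpace A) :=
  if 1 ≤ p.1 ∧ N ≤ p.1 ∧ p.2 ∈ wordsOfLen (language X) p.1 then ESet X f p.1 p.2 else ∅

lemma recSetF_subset_iUnion (X : Set (SeqSpace A)) (f : SeqSpace A → ℝ) {N : ℕ} (hN : 1 ≤ N) :
    recSetF X f ⊆ ⋃ p : ℕ × List A, TSet X f N p := by
  intro x hx
  obtain ⟨hxX, hfreq⟩ := hx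
  obtain ⟨n, hrec, hnN⟩ := (hfreq.and_eventually (Filter.eventually_ge_atTop N)).exists
  have hocc : OccursAt (List.ofFn fun i : Fin n => x i) x 0 := by
    intro i hi
    have hi' : i < n := by simpa using hi
    simp [OccursAt, List.getElem_ofFn]
  have hw : (List.ofFn fun i : Fin n => x i) ∈ wordsOfLen (language X) n := by
    refine ⟨⟨x, hxX, 0, hocc⟩, by simp⟩
  refine Set.mem_iUnion.mpr ⟨(n, List.ofFn fun i : Fin n => x i), ?_⟩
  rw [TSet, if_pos ⟨hN.trans hnN, hnN, hw⟩]
  exact ⟨hxX, hocc, hrec⟩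

/-- Diameter estimate for the covering sets. -/
lemma diam_ESet {X : Set (SeqSpace A)} (hXinv : shift '' X ⊆ X)
    {f : SeqSpace A → ℝ} (hfnn : ∀ y ∈ X, 0 ≤ f y) {t : ℝ} (htpos : 0 < t)
    {n : ℕ} (hn : 1 ≤ n) {w : List A} (hwlen : w.length = n)
    (hbdd : BddAbove (birkhoff (fun y => -(t * (f y + 1))) n '' (X ∩ cyl w))) :
    ∃ m : ℕ,
      EMetric.diam (ESet X f n w) ≤ ENNReal.ofReal (Real.exp (-((n + m : ℕ) : ℝ))) ∧
      -(((n + m : ℕ) : ℝ)) * t ≤ sSup (birkhoff (fun y => -(t * (f y + 1))) n '' (X ∩ cyl w)) := by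
  set b := sSup (birkhoff (fun y => -(t * (f y + 1))) n '' (X ∩ cyl w)) with hb
  set r : ℝ := -b / t - n with hr
  refine ⟨⌈r⌉₊, ?_, ?_⟩
  · have hkey : ∀ x ∈ ESet X f n w, ∀ i : ℕ, (i : ℝ) < r → x (n + i) = x i := by
      rintro x ⟨hxX, hxc, hxd⟩ i hi
      have hmem : birkhoff (fun y => -(t * (f y + 1))) n x ≤ b :=
        le_csSup hbdd ⟨x, ⟨hxX, hxc⟩, rfl⟩
      rw [birkhoff_phi] at hmem
      have hSx : r ≤ birkhoff f n x := by
        have h1 : -b ≤ (birkhoff f n x + n) * t := by nlinarith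
        have h2 := (div_le_iff₀ htpos).mpr h1
        rw [hr]
        linarith
      have hag := agree_of_dist_le hxd (hi.trans_le hSx)
      rw [shift_iter_apply] at hag
      rw [show n + i = i + n by omega]
      exact hag
    apply EMetric.diam_le
    intro x hx y hy
    rw [edist_dist]
    apply ENNReal.ofReal_le_ofReal
    apply dist_le_of_agree
    refine agree_chain hn ?_ ?_ ?_
    · intro i hi
      have h1 := hx.2.1 i (by omega)
      have h2 := hy.2.1 i (by omega)
      rw [zero_add] at h1 h2
      rw [h1, h2]
    · intro i hi
      exact hkey x hx i (Nat.lt_ceil.mp hi)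
    · intro i hi
      exact hkey y hy i (Nat.lt_ceil.mp hi)
  · have hm : r ≤ (⌈r⌉₊ : ℝ) := Nat.le_ceil r
    rw [hr] at hm
    have h1 : -b / t ≤ ((n + ⌈r⌉₊ : ℕ) : ℝ) := by push_cast; linarith
    have h2 := (div_le_iff₀ htpos).mp h1
    linarith

end RecAux

namespace RecAux
open SeqSpace Filter

variable {A : Type*} [Finite A]

lemma bddAbove_birkhoff {X : Set (SeqSpace A)} (hXinv : shift '' X ⊆ X)
    {φ : SeqSpace A → ℝ} {M : ℝ} (hφ : ∀ y ∈ X, φ y ≤ M) (n : ℕ) (w : List A) :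
    BddAbove (birkhoff φ n '' (X ∩ cyl w)) := by
  refine ⟨n * M, ?_⟩
  rintro v ⟨x, hx, rfl⟩
  exact birkhoff_le_of_le hXinv hφ hx.1 n

lemma sSup_birkhoff_le {X : Set (SeqSpace A)} (hXinv : shift '' X ⊆ X)
    {φ : SeqSpace A → ℝ} {M : ℝ} (hM0 : 0 ≤ M) (hφ : ∀ y ∈ X, φ y ≤ M) (n : ℕ) (w : List A) :
    sSup (birkhoff φ n '' (X ∩ cyl w)) ≤ n * M := by
  rcases (birkhoff φ n '' (X ∩ cyl w)).eq_empty_or_nonempty with h | h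
  · rw [h, Real.sSup_empty]
    positivity
  · refine csSup_le h ?_
    rintro v ⟨x, hx, rfl⟩
    exact birkhoff_le_of_le hXinv hφ hx.1 n

lemma Zsum_le_pow [Nonempty A] {X : Set (SeqSpace A)} (hXinv : shift '' X ⊆ X)
    {φ : SeqSpace A → ℝ} {M : ℝ} (hM0 : 0 ≤ M) (hφ : ∀ y ∈ X, φ y ≤ M) (n : ℕ) :
    Zsum X φ n ≤ (Nat.card A : ℝ) ^ n * Real.exp (n * M) := by
  rw [Zsum_eq]
  calc ∑ w ∈ (wordsFin X n).toFinset, Real.exp (sSup (birkhoff φ n '' (X ∩ cyl w)))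
      ≤ (wordsFin X n).toFinset.card • Real.exp (n * M) := by
        refine Finset.sum_le_card_nsmul _ _ _ ?_
        intro w _
        exact Real.exp_le_exp.mpr (sSup_birkhoff_le hXinv hM0 hφ n w)
    _ ≤ ((Nat.card A) ^ n) • Real.exp (n * M) := by
        refine nsmul_le_nsmul_left (Real.exp_pos _).le ?_
        exact card_words_le (wordsFin X n) fun w hw => hw.2
    _ = (Nat.card A : ℝ) ^ n * Real.exp (n * M) := by
        rw [nsmul_eq_mul]
        push_cast
        ring

lemma log_Zsum_div_le [Nonempty A] {X : Set (SeqSpace A)} (hXinv : shift '' X ⊆ X)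
    {φ : SeqSpace A → ℝ} {M : ℝ} (hM0 : 0 ≤ M) (hφ : ∀ y ∈ X, φ y ≤ M) (n : ℕ) :
    Real.log (Zsum X φ n) / n ≤ max 0 (Real.log (Nat.card A) + M) := by
  rcases Nat.eq_zero_or_pos n with rfl | hn
  · simp
  have hcard1 : (1 : ℝ) ≤ (Nat.card A : ℝ) := by
    have : 0 < Nat.card A := Nat.card_pos
    exact_mod_cast this
  have hB1 : (1:ℝ) ≤ (Nat.card A : ℝ) ^ n * Real.exp (n * M) := by
    have h1 : (1:ℝ) ≤ (Nat.card A : ℝ) ^ n := one_le_pow₀ hcard1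
    have h2 : (1:ℝ) ≤ Real.exp (n * M) := Real.one_le_exp (by positivity)
    nlinarith
  have hBpos : (0:ℝ) < (Nat.card A : ℝ) ^ n * Real.exp (n * M) := by linarith
  have hlog : Real.log (Zsum X φ n) ≤ Real.log ((Nat.card A : ℝ) ^ n * Real.exp (n * M)) := by
    rcases eq_or_lt_of_le (Zsum_nonneg X φ n) with h | h
    · rw [← h, Real.log_zero]
      exact Real.log_nonneg hB1
    · exact Real.log_le_log h (Zsum_le_pow hXinv hM0 hφ n)
  have hlogB : Real.log ((Nat.card A : ℝ) ^ n * Real.exp (n * M))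
      = n * (Real.log (Nat.card A) + M) := by
    rw [Real.log_mul (by positivity) (Real.exp_ne_zero _), Real.log_pow, Real.log_exp]
    ring
  rw [div_le_iff₀ (by exact_mod_cast hn)]
  calc Real.log (Zsum X φ n) ≤ n * (Real.log (Nat.card A) + M) := hlog.trans_eq hlogB
    _ ≤ max 0 (Real.log (Nat.card A) + M) * n := by
        rw [mul_comm]
        have : (0:ℝ) ≤ (n:ℝ) := by positivity
        nlinarith [le_max_right (0:ℝ) (Real.log (Nat.card A) + M)]

lemma Zsum_cmp {X : Set (SeqSpace A)} (hXinv : shift '' X ⊆ X)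
    {f : SeqSpace A → ℝ} (hfnn : ∀ y ∈ X, 0 ≤ f y) {s t : ℝ} (hs : 0 ≤ s) (hst : s < t)
    (hbddS : ∀ (n : ℕ) (w : List A),
      BddAbove (birkhoff (fun y => -(s * (f y + 1))) n '' (X ∩ cyl w))) (n : ℕ) :
    Zsum X (fun y => -(t * (f y + 1))) n
      ≤ Real.exp (-((t - s) * n)) * Zsum X (fun y => -(s * (f y + 1))) n := by
  rw [Zsum_eq, Zsum_eq, Finset.mul_sum]
  refine Finset.sum_le_sum ?_
  intro w hw
  rw [Set.Finite.mem_toFinset] at hw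
  have hCne : (X ∩ cyl w).Nonempty := cyl_nonempty hXinv hw.1
  have hcmp : sSup (birkhoff (fun y => -(t * (f y + 1))) n '' (X ∩ cyl w))
      ≤ sSup (birkhoff (fun y => -(s * (f y + 1))) n '' (X ∩ cyl w)) - (t - s) * n := by
    refine csSup_le (hCne.image _) ?_
    rintro v ⟨x, hx, rfl⟩
    have hS0 : 0 ≤ birkhoff f n x := birkhoff_nonneg hXinv hfnn hx.1 n
    have hmem : birkhoff (fun y => -(s * (f y + 1))) n x
        ≤ sSup (birkhoff (fun y => -(s * (f y + 1))) n '' (X ∩ cyl w)) :=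
      le_csSup (hbddS n w) ⟨x, hx, rfl⟩
    rw [birkhoff_phi] at hmem ⊢
    nlinarith
  calc Real.exp (sSup (birkhoff (fun y => -(t * (f y + 1))) n '' (X ∩ cyl w)))
      ≤ Real.exp (sSup (birkhoff (fun y => -(s * (f y + 1))) n '' (X ∩ cyl w)) - (t - s) * n) :=
        Real.exp_le_exp.mpr hcmp
    _ = Real.exp (-((t - s) * n)) *
        Real.exp (sSup (birkhoff (fun y => -(s * (f y + 1))) n '' (X ∩ cyl w))) := by
        rw [← Real.exp_add]
        congr 1
        ring

end RecAux

namespace RecAux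
open SeqSpace Filter

variable {A : Type*} [Finite A] [Nonempty A]

lemma Zsum_eventually_le {X : Set (SeqSpace A)} (hXinv : shift '' X ⊆ X)
    {f : SeqSpace A → ℝ} (hfnn : ∀ y ∈ X, 0 ≤ f y) {s t M : ℝ} (hs : 0 ≤ s) (hst : s < t)
    (hM0 : 0 ≤ M) (hφub : ∀ y ∈ X, -(s * (f y + 1)) ≤ s * (M + 1))
    (hP : pressure X (language X) (fun x => -(s * (f x + 1))) = 0) :
    ∃ N₀ : ℕ, 1 ≤ N₀ ∧ ∀ n, N₀ ≤ n →
      Zsum X (fun y => -(t * (f y + 1))) n ≤ Real.exp (-((t - s) / 2)) ^ n := by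
  set ε : ℝ := t - s with hε
  have hεpos : 0 < ε := sub_pos.mpr hst
  rw [pressure_eq, limsup_eq] at hP
  set Sset := {a : ℝ | ∀ᶠ n : ℕ in atTop,
    Real.log (Zsum X (fun x => -(s * (f x + 1))) n) / n ≤ a} with hSset
  have hsM1 : (0:ℝ) ≤ s * (M + 1) := by positivity
  have hKmem : (max 0 (Real.log (Nat.card A) + s * (M + 1))) ∈ Sset :=
    Filter.Eventually.of_forall (log_Zsum_div_le hXinv hsM1 hφub)
  obtain ⟨c, hcS, hc⟩ : ∃ c ∈ Sset, c < ε / 2 := by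
    by_cases hbb : BddBelow Sset
    · exact (csInf_lt_iff hbb ⟨_, hKmem⟩).mp (by rw [hP]; positivity)
    · obtain ⟨y, hy, hlt⟩ := not_bddBelow_iff.mp hbb (ε / 2)
      exact ⟨y, hy, hlt⟩
  obtain ⟨N₁, hN₁⟩ := eventually_atTop.mp hcS
  refine ⟨max N₁ 1, le_max_right _ _, ?_⟩
  intro n hn
  have hn1 : 1 ≤ n := le_trans (le_max_right _ _) hn
  have hnR : (0:ℝ) < (n:ℝ) := by exact_mod_cast hn1
  have hnN₁ : N₁ ≤ n := le_trans (le_max_left _ _) hn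
  have hbddS : ∀ (k : ℕ) (w : List A),
      BddAbove (birkhoff (fun y => -(s * (f y + 1))) k '' (X ∩ cyl w)) :=
    fun k w => bddAbove_birkhoff hXinv hφub k w
  rcases Finset.eq_empty_or_nonempty ((wordsFin X n).toFinset) with hemp | hne
  · have hz : Zsum X (fun y => -(t * (f y + 1))) n = 0 := by
      rw [Zsum_eq, hemp, Finset.sum_empty]
    rw [hz]
    positivity
  · have hZspos : 0 < Zsum X (fun x => -(s * (f x + 1))) n := by
      rw [Zsum_eq]
      exact Finset.sum_pos (fun w _ => Real.exp_pos _) hne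
    have hlogZ : Real.log (Zsum X (fun x => -(s * (f x + 1))) n) ≤ c * n := by
      have h := hN₁ n hnN₁
      rw [div_le_iff₀ hnR] at h
      linarith
    have hZs_le : Zsum X (fun x => -(s * (f x + 1))) n ≤ Real.exp (c * n) := by
      rw [← Real.exp_log hZspos]
      exact Real.exp_le_exp.mpr hlogZ
    calc Zsum X (fun y => -(t * (f y + 1))) n
        ≤ Real.exp (-(ε * n)) * Zsum X (fun x => -(s * (f x + 1))) n := by
          have := Zsum_cmp hXinv hfnn hs hst hbddS n
          simpa [hε] using this
      _ ≤ Real.exp (-(ε * n)) * Real.exp (c * n) := by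
          exact mul_le_mul_of_nonneg_left hZs_le (Real.exp_pos _).le
      _ = Real.exp ((c - ε) * n) := by
          rw [← Real.exp_add]
          congr 1
          ring
      _ ≤ Real.exp (-(ε / 2)) ^ n := by
          rw [← Real.exp_nat_mul]
          apply Real.exp_le_exp.mpr
          nlinarith [hc, hnR.le]

end RecAux

/-- **Upper bound in Theorem 1.5.** For any subshift `X` and any continuous positive
`f : X → (0,∞)`, `dim_H R(f) ≤ s(X)`, where `s(X)` is the unique root `s ≥ 0` of
`P(-s(f+1)) = 0`; no specification hypothesis is needed. -/
theorem dimH_recSetF_le_root_of_pressure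
    {A : Type*} [Finite A] (X : Set (SeqSpace A))
    (hXcomp : IsCompact X) (hXinv : shift '' X ⊆ X)
    (f : SeqSpace A → ℝ) (hfc : ContinuousOn f X) (hfpos : ∀ x ∈ X, 0 < f x) :
    ∀ s : ℝ, 0 ≤ s → pressure X (language X) (fun x => -(s * (f x + 1))) = 0 →
      dimH (recSetF X f) ≤ ENNReal.ofReal s := by
  intro s hs hP
  classical
  rcases isEmpty_or_nonempty A with hA | hA
  · have hempty : recSetF X f = ∅ := by
      ext x
      exact iff_of_false (fun _ => hA.false (x 0)) (Set.notMem_empty x)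
    rw [hempty, dimH_empty]
    exact zero_le
  borelize (SeqSpace A)
  refine le_of_not_gt fun hlt => ?_
  obtain ⟨t, ht1, ht2⟩ := ENNReal.lt_iff_exists_nnreal_btwn.mp hlt
  have hst : s < (t : ℝ) := by
    rw [← ENNReal.ofReal_coe_nnreal] at ht1
    exact (ENNReal.ofReal_lt_ofReal_iff_of_nonneg hs).mp ht1
  have htpos : (0:ℝ) < (t:ℝ) := hs.trans_lt hst
  obtain ⟨C, hC⟩ := hXcomp.exists_bound_of_continuousOn hfc
  set M : ℝ := max C 0 with hM
  have hM0 : 0 ≤ M := le_max_right _ _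
  have hMf : ∀ y ∈ X, |f y| ≤ M := fun y hy => by
    have h := hC y hy
    rw [Real.norm_eq_abs] at h
    exact h.trans (le_max_left _ _)
  have hfnn : ∀ y ∈ X, 0 ≤ f y := fun y hy => (hfpos y hy).le
  have hφub : ∀ u : ℝ, 0 ≤ u → ∀ y ∈ X, -(u * (f y + 1)) ≤ u * (M + 1) := by
    intro u hu y hy
    have h1 := abs_le.mp (hMf y hy)
    nlinarith [h1.1, h1.2]
  obtain ⟨N₀, hN₀1, hN₀⟩ :=
    RecAux.Zsum_eventually_le hXinv hfnn hs hst hM0 (hφub s hs) hP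
  set q : ℝ := Real.exp (-(((t:ℝ) - s) / 2)) with hqdef
  have hq0 : 0 ≤ q := (Real.exp_pos _).le
  have hq1 : q < 1 := Real.exp_lt_one_iff.mpr (by linarith)
  set Q : ℝ≥0∞ := ENNReal.ofReal q with hQdef
  have hQ1 : Q < 1 := by
    rw [hQdef]
    exact ENNReal.ofReal_lt_one.mpr hq1
  have hbddT : ∀ (n : ℕ) (w : List A),
      BddAbove (birkhoff (fun y => -((t:ℝ) * (f y + 1))) n '' (X ∩ cyl w)) :=
    fun n w => RecAux.bddAbove_birkhoff hXinv (hφub (t:ℝ) htpos.le) n w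
  -- `hausdorffMeasure_le_liminf_tsum` ingredients
  have hr : Tendsto (fun N : ℕ => ENNReal.ofReal (Real.exp (-(N:ℝ)))) atTop (nhds 0) := by
    have h1 : Tendsto (fun N : ℕ => -(N : ℝ)) atTop atBot :=
      tendsto_neg_atBot_iff.mpr tendsto_natCast_atTop_atTop
    have h2 : Tendsto (fun N : ℕ => Real.exp (-(N:ℝ))) atTop (nhds 0) :=
      Real.tendsto_exp_atBot.comp h1
    simpa using ENNReal.tendsto_ofReal h2
  have hdiam : ∀ᶠ N : ℕ in atTop, ∀ p : ℕ × List A,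
      EMetric.diam (RecAux.TSet X f N p) ≤ ENNReal.ofReal (Real.exp (-(N:ℝ))) := by
    refine Eventually.of_forall fun N p => ?_
    by_cases hcond : 1 ≤ p.1 ∧ N ≤ p.1 ∧ p.2 ∈ wordsOfLen (language X) p.1
    · rw [RecAux.TSet, if_pos hcond]
      obtain ⟨h1, hNn, hw⟩ := hcond
      obtain ⟨m, hd, _⟩ := RecAux.diam_ESet hXinv hfnn htpos h1 hw.2 (hbddT p.1 p.2)
      refine hd.trans (ENNReal.ofReal_le_ofReal (Real.exp_le_exp.mpr ?_))
      have hle : (N:ℝ) ≤ ((p.1 + m : ℕ):ℝ) := by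
        have : N ≤ p.1 + m := le_trans hNn (Nat.le_add_right _ _)
        exact_mod_cast this
      linarith
    · rw [RecAux.TSet, if_neg hcond]
      simp [EMetric.diam]
  have hsub : ∀ᶠ N : ℕ in atTop,
      recSetF X f ⊆ ⋃ p : ℕ × List A, RecAux.TSet X f N p := by
    filter_upwards [eventually_ge_atTop 1] with N hN
    exact RecAux.recSetF_subset_iUnion X f hN
  have hcov := Measure.hausdorffMeasure_le_liminf_tsum (X := SeqSpace A) ((t : ℝ≥0) : ℝ)
    (recSetF X f) (fun N : ℕ => ENNReal.ofReal (Real.exp (-(N:ℝ)))) hr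
    (fun N => RecAux.TSet X f N) hdiam hsub
  -- the tail sum bound
  have hbound : ∀ᶠ N : ℕ in atTop,
      (∑' p : ℕ × List A, EMetric.diam (RecAux.TSet X f N p) ^ ((t : ℝ≥0) : ℝ))
        ≤ Q ^ N * (1 - Q)⁻¹ := by
    filter_upwards [eventually_ge_atTop (max N₀ 1)] with N hN
    have hN1 : 1 ≤ N := le_trans (le_max_right _ _) hN
    have hNN₀ : N₀ ≤ N := le_trans (le_max_left _ _) hN
    have htR : (0:ℝ) < ((t : ℝ≥0) : ℝ) := htpos
    have hterm : ∀ (n : ℕ) (w : List A),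
        EMetric.diam (RecAux.TSet X f N (n, w)) ^ ((t : ℝ≥0) : ℝ)
          ≤ (if N ≤ n ∧ w ∈ wordsOfLen (language X) n then
              ENNReal.ofReal (Real.exp
                (sSup (birkhoff (fun y => -((t:ℝ) * (f y + 1))) n '' (X ∩ cyl w))))
            else 0) := by
      intro n w
      by_cases hcond : 1 ≤ n ∧ N ≤ n ∧ w ∈ wordsOfLen (language X) n
      · rw [RecAux.TSet, if_pos hcond, if_pos ⟨hcond.2.1, hcond.2.2⟩]
        obtain ⟨h1, hNn, hw⟩ := hcond
        obtain ⟨m, hd, hsup⟩ := RecAux.diam_ESet hXinv hfnn htpos h1 hw.2 (hbddT n w)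
        calc EMetric.diam (RecAux.ESet X f n w) ^ ((t : ℝ≥0) : ℝ)
            ≤ (ENNReal.ofReal (Real.exp (-((n + m : ℕ) : ℝ)))) ^ ((t : ℝ≥0) : ℝ) :=
              ENNReal.rpow_le_rpow hd htR.le
          _ = ENNReal.ofReal ((Real.exp (-((n + m : ℕ) : ℝ))) ^ ((t : ℝ≥0) : ℝ)) :=
              ENNReal.ofReal_rpow_of_pos (Real.exp_pos _)
          _ = ENNReal.ofReal (Real.exp (-((n + m : ℕ) : ℝ) * (t:ℝ))) := by
              rw [← Real.exp_mul]
          _ ≤ ENNReal.ofReal (Real.exp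
                (sSup (birkhoff (fun y => -((t:ℝ) * (f y + 1))) n '' (X ∩ cyl w)))) :=
              ENNReal.ofReal_le_ofReal (Real.exp_le_exp.mpr hsup)
      · rw [RecAux.TSet, if_neg hcond]
        rw [EMetric.diam, EMetric.diam_empty, ENNReal.zero_rpow_of_pos htR]
        exact zero_le
    calc (∑' p : ℕ × List A, EMetric.diam (RecAux.TSet X f N p) ^ ((t : ℝ≥0) : ℝ))
        = ∑' (n : ℕ) (w : List A),
            EMetric.diam (RecAux.TSet X f N (n, w)) ^ ((t : ℝ≥0) : ℝ) :=
          ENNReal.tsum_prod'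
      _ ≤ ∑' n : ℕ, (if N ≤ n then Q ^ n else 0) := by
          refine ENNReal.tsum_le_tsum fun n => ?_
          refine (ENNReal.tsum_le_tsum fun w => hterm n w).trans ?_
          by_cases hNn : N ≤ n
          · simp only [hNn, true_and, if_true]
            have hts : (∑' w : List A, (if w ∈ wordsOfLen (language X) n then
                ENNReal.ofReal (Real.exp
                  (sSup (birkhoff (fun y => -((t:ℝ) * (f y + 1))) n '' (X ∩ cyl w))))
              else 0))
                = ∑ w ∈ (RecAux.wordsFin X n).toFinset,
                    ENNReal.ofReal (Real.exp
                      (sSup (birkhoff (fun y => -((t:ℝ) * (f y + 1))) n '' (X ∩ cyl w)))) := by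
              rw [tsum_eq_sum (s := (RecAux.wordsFin X n).toFinset) ?_]
              · exact Finset.sum_congr rfl fun w hw =>
                  if_pos ((RecAux.wordsFin X n).mem_toFinset.mp hw)
              · intro w hw
                rw [if_neg]
                intro hmem
                exact hw ((RecAux.wordsFin X n).mem_toFinset.mpr hmem)
            rw [hts, ← ENNReal.ofReal_sum_of_nonneg fun w _ => (Real.exp_pos _).le,
              ← RecAux.Zsum_eq]
            calc ENNReal.ofReal (RecAux.Zsum X (fun y => -((t:ℝ) * (f y + 1))) n)
                ≤ ENNReal.ofReal (q ^ n) :=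
                  ENNReal.ofReal_le_ofReal (hN₀ n (le_trans hNN₀ hNn))
              _ = Q ^ n := by rw [hQdef, ENNReal.ofReal_pow hq0]
          · simp only [hNn, false_and, if_false]
            simp
      _ = ∑' k : ℕ, (if N ≤ k + N then Q ^ (k + N) else 0) := by
          refine (Function.Injective.tsum_eq (g := fun k : ℕ => k + N)
            (add_left_injective N) ?_).symm
          intro n hn
          simp only [Function.mem_support] at hn
          rcases le_or_gt N n with h | h
          · exact ⟨n - N, by show n - N + N = n; omega⟩
          · exact absurd (if_neg (not_le.mpr h)) hn
      _ = ∑' k : ℕ, Q ^ N * Q ^ k := by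
          congr 1
          funext k
          rw [if_pos (by omega), pow_add, mul_comm]
      _ = Q ^ N * (1 - Q)⁻¹ := by rw [ENNReal.tsum_mul_left, ENNReal.tsum_geometric]
  have hQtail : Tendsto (fun N : ℕ => Q ^ N * (1 - Q)⁻¹) atTop (nhds 0) := by
    have hQt := ENNReal.tendsto_pow_atTop_nhds_zero_of_lt_one hQ1
    have hne : (1 - Q)⁻¹ ≠ ⊤ := by
      rw [Ne, ENNReal.inv_eq_top]
      intro h
      exact absurd (tsub_eq_zero_iff_le.mp h) (not_le.mpr hQ1)
    simpa using ENNReal.Tendsto.mul_const hQt (Or.inr hne)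
  have hliminf :
      Filter.liminf (fun N : ℕ => ∑' p : ℕ × List A,
        EMetric.diam (RecAux.TSet X f N p) ^ ((t : ℝ≥0) : ℝ)) atTop = 0 := by
    refine le_antisymm ?_ (zero_le)
    calc Filter.liminf (fun N : ℕ => ∑' p : ℕ × List A,
          EMetric.diam (RecAux.TSet X f N p) ^ ((t : ℝ≥0) : ℝ)) atTop
        ≤ Filter.liminf (fun N : ℕ => Q ^ N * (1 - Q)⁻¹) atTop :=
          Filter.liminf_le_liminf hbound
      _ = 0 := hQtail.liminf_eq
  have hμ : μH[((t : ℝ≥0) : ℝ)] (recSetF X f) = 0 :=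
    le_antisymm (hcov.trans (le_of_eq hliminf)) (zero_le)
  have hinf := hausdorffMeasure_of_lt_dimH (d := t) ht2
  rw [hμ] at hinf
  exact ENNReal.zero_ne_top hinf
end
end
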